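/- Let n ≥ 1, let H, G : ℝⁿ × ℝⁿ → ℝ be C¹, and let z = (q,p) : I → ℝⁿ × ℝⁿ be a curve on an open interval I that solves Hamilton's equations for H, with H(q(t),p(t)) = 0 for all t ∈ I and G(q(t),p(t)) ≠ 0 for all t ∈ I. Let τ : I → J be a C¹ diffeomorphism onto an open interval J with τ'(t) = 1/G(q(t),p(t)) for all t ∈ I, and let t(·) : J → I be its inverse. Then the reparametrized curve w(τ) = (q(t(τ)), p(t(τ))) solves Hamilton's equations for the Hamiltonian H̃ = H·G on J. -/

import Mathlib

/-- A curve `(q, p)` on the set `I ⊆ ℝ` solves Hamilton's equations for the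
Hamiltonian `K : ℝⁿ × ℝⁿ → ℝ`:  `qᵢ' = ∂K/∂pᵢ` and `pᵢ' = −∂K/∂qᵢ` on `I`. -/
def IsHamiltonianSolOn (n : ℕ) (K : (Fin n → ℝ) × (Fin n → ℝ) → ℝ)
    (q p : ℝ → (Fin n → ℝ)) (I : Set ℝ) : Prop :=
  ∀ t ∈ I, ∀ i : Fin n,
    HasDerivAt (fun t' => q t' i) (fderiv ℝ K (q t, p t) (0, Pi.single i 1)) t ∧
    HasDerivAt (fun t' => p t' i) (-(fderiv ℝ K (q t, p t) (Pi.single i 1, 0))) t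

/-- **Time reparametrization of Hamiltonian flows on a zero energy level.**
If `(q,p)` solves Hamilton's equations for `H` on the open interval `I`, stays
on the level `H = 0`, `G ≠ 0` along the trajectory, and `τ : I → J` is a C¹
diffeomorphism with `τ'(t) = 1/G(q(t),p(t))` and inverse `σ : J → I`, then the
reparametrized curve `s ↦ (q(σ(s)), p(σ(s)))` solves Hamilton's equations for
the Hamiltonian `H̃ = H·G` on `J`. -/
theorem reparam_hamiltonian_flow
    (n : ℕ) (hn : 1 ≤ n)
    (H G : (Fin n → ℝ) × (Fin n → ℝ) → ℝ)
    (hH : ContDiff ℝ 1 H) (hG : ContDiff ℝ 1 G)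
    (I J : Set ℝ) (hI : IsOpen I) (hIconn : I.OrdConnected) (hIne : I.Nonempty)
    (hJ : IsOpen J) (hJconn : J.OrdConnected)
    (q p : ℝ → (Fin n → ℝ))
    (hsol : IsHamiltonianSolOn n H q p I)
    (hH0 : ∀ t ∈ I, H (q t, p t) = 0)
    (hG0 : ∀ t ∈ I, G (q t, p t) ≠ 0)
    (τ σ : ℝ → ℝ)
    (hτmaps : Set.MapsTo τ I J) (hσmaps : Set.MapsTo σ J I)
    (hστ : ∀ t ∈ I, σ (τ t) = t) (hτσ : ∀ s ∈ J, τ (σ s) = s)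
    (hτ' : ∀ t ∈ I, HasDerivAt τ (1 / G (q t, p t)) t)
    (hσdiff : ∀ s ∈ J, DifferentiableAt ℝ σ s) :
    IsHamiltonianSolOn n (fun z => H z * G z)
      (fun s => q (σ s)) (fun s => p (σ s)) J := by
  intro s hs i
  set t := σ s with ht
  have htI : t ∈ I := hσmaps hs
  have hGne : G (q t, p t) ≠ 0 := hG0 t htI
  -- derivative of σ at s is G (q t, p t)
  have hσ' : HasDerivAt σ (G (q t, p t)) s := by
    have h1 : HasDerivAt τ (1 / G (q t, p t)) (σ s) := hτ' t htI
    have h2 : (1 / G (q t, p t)) ≠ 0 := one_div_ne_zero hGne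
    have h3 : ∀ᶠ y in nhds s, τ (σ y) = y :=
      Filter.eventually_of_mem (hJ.mem_nhds hs) hτσ
    have := HasDerivAt.of_local_left_inverse (hσdiff s hs).continuousAt h1 h2 h3
    simpa [one_div] using this
  -- fderiv of H*G at the point, using H = 0
  have hHd : DifferentiableAt ℝ H (q t, p t) := (hH.differentiable one_ne_zero).differentiableAt
  have hGd : DifferentiableAt ℝ G (q t, p t) := (hG.differentiable one_ne_zero).differentiableAt
  have hfd : ∀ v, fderiv ℝ (fun z => H z * G z) (q t, p t) v
      = G (q t, p t) * fderiv ℝ H (q t, p t) v := by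
    intro v
    rw [fderiv_fun_mul hHd hGd]
    simp [hH0 t htI, smul_eq_mul]
  constructor
  · have := ((hsol t htI i).1.comp s hσ')
    rw [hfd]
    convert this using 1
    case e'_9 => ring
    all_goals rfl
  · have := ((hsol t htI i).2.comp s hσ')
    rw [hfd]
    convert this using 1
    case e'_9 => ring
    all_goals rfl
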